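/- arXiv:2502.19921 — 3 statements merged into one kernel-verified Lean document; each statement's English description precedes it below -/
import Mathlib

section
/- Let T > 0, let f : AddCircle T → ℂ be integrable with c₁(f) ≠ 0, and let φ : ℝ. Then the first Fourier coefficient of the transformed signal satisfies fourierCoeff (𝒯(f,φ)) 1 = (‖c₁(f)‖ : ℂ) · Complex.exp(φ·i); in particular it has modulus ‖c₁(f)‖ and its argument is congruent to φ modulo 2π, so the transformation matches the phase angle of the harmonic at frequency ω₁ = 2π/T with the desired angle φ. -/
open MeasureTheory

/-- `theta T f φ` is the representative in `[0, 2π)` of `arg (c₁ f) − φ` modulo `2π`. -/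
noncomputable def theta (T : ℝ) [Fact (0 < T)] (f : AddCircle T → ℂ) (φ : ℝ) : ℝ :=
  toIcoMod Real.two_pi_pos 0 (Complex.arg (fourierCoeff f 1) - φ)

/-- The computed time-shift amount `Δφ(f, φ)`. -/
noncomputable def deltaPhi (T : ℝ) [Fact (0 < T)] (f : AddCircle T → ℂ) (φ : ℝ) : ℝ :=
  if theta T f φ > Real.pi then (theta T f φ - 2 * Real.pi) * T / (2 * Real.pi)
  else theta T f φ * T / (2 * Real.pi)

/-- The transformation `𝒯(f, φ)`: circularly shift `f` by `Δφ(f, φ)`. -/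
noncomputable def transf (T : ℝ) [Fact (0 < T)] (f : AddCircle T → ℂ) (φ : ℝ) :
    AddCircle T → ℂ :=
  fun x => f (x - (deltaPhi T f φ : AddCircle T))

lemma fourierCoeff_shift (T : ℝ) [Fact (0 < T)] (f : AddCircle T → ℂ) (d : AddCircle T)
    (n : ℤ) :
    fourierCoeff (fun x => f (x - d)) n = fourier (-n) d * fourierCoeff f n := by
  unfold fourierCoeff
  rw [← integral_add_right_eq_self (μ := AddCircle.haarAddCircle)
    (fun x => fourier (-n) x • f (x - d)) d]
  have hmul : ∀ x : AddCircle T, (fourier (-n)) (x + d) = fourier (-n) x * fourier (-n) d :=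
    fun x => by
      rw [fourier_apply, smul_add, AddCircle.toCircle_add, Circle.coe_mul, ← fourier_apply,
        ← fourier_apply]
  simp only [add_sub_cancel_right, smul_eq_mul, hmul, ← integral_const_mul]
  congr 1 with x
  ring

/-- The transformation matches the phase angle of the first harmonic with the desired
angle `φ`: the first Fourier coefficient of `𝒯(f, φ)` equals `‖c₁ f‖ · exp (φ i)`. -/
theorem fourierCoeff_one_transf (T : ℝ) [Fact (0 < T)] (f : AddCircle T → ℂ)
    (hf : Integrable f AddCircle.haarAddCircle) (hc : fourierCoeff f 1 ≠ 0) (φ : ℝ) :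
    fourierCoeff (transf T f φ) 1 =
      (‖fourierCoeff f 1‖ : ℂ) * Complex.exp ((φ : ℂ) * Complex.I) := by
  have hT : (0 : ℝ) < T := Fact.out
  have hπ : (Real.pi : ℂ) ≠ 0 := Complex.ofReal_ne_zero.2 Real.pi_ne_zero
  have hT' : (T : ℂ) ≠ 0 := Complex.ofReal_ne_zero.2 hT.ne'
  unfold transf
  rw [fourierCoeff_shift]
  have h1 : (fourier (-1) ((deltaPhi T f φ : ℝ) : AddCircle T) : ℂ) =
      Complex.exp (-(theta T f φ : ℂ) * Complex.I) := by
    rw [fourier_coe_apply]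
    unfold deltaPhi
    split_ifs with h
    · have hexp : (2 * (Real.pi : ℂ) * Complex.I * ((-1 : ℤ) : ℂ) *
          (((theta T f φ - 2 * Real.pi) * T / (2 * Real.pi) : ℝ) : ℂ) / (T : ℂ))
          = -(theta T f φ : ℂ) * Complex.I + (1 : ℤ) * (2 * Real.pi * Complex.I) := by
        push_cast
        field_simp
        ring
      rw [hexp, Complex.exp_add, Complex.exp_int_mul_two_pi_mul_I, mul_one]
    · congr 1
      push_cast
      field_simp
  rw [h1]
  have h2 : Complex.exp (-(theta T f φ : ℂ) * Complex.I) =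
      Complex.exp ((-(Complex.arg (fourierCoeff f 1) - φ) : ℝ) * Complex.I) := by
    have hθ : theta T f φ = (Complex.arg (fourierCoeff f 1) - φ)
        - (toIcoDiv Real.two_pi_pos 0 (Complex.arg (fourierCoeff f 1) - φ)) * (2 * Real.pi) := by
      unfold theta
      rw [← self_sub_toIcoDiv_zsmul Real.two_pi_pos 0
        (Complex.arg (fourierCoeff f 1) - φ), zsmul_eq_mul]
    rw [hθ]
    set k := toIcoDiv Real.two_pi_pos 0 (Complex.arg (fourierCoeff f 1) - φ)
    rw [show (-(((Complex.arg (fourierCoeff f 1) - φ) - (k : ℝ) * (2 * Real.pi) : ℝ)) : ℂ)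
          * Complex.I
        = (-(Complex.arg (fourierCoeff f 1) - φ) : ℝ) * Complex.I
          + (k : ℤ) * (2 * Real.pi * Complex.I) by push_cast; ring]
    rw [Complex.exp_add, Complex.exp_int_mul_two_pi_mul_I, mul_one]
  rw [h2]
  have key : fourierCoeff f 1 =
      (‖fourierCoeff f 1‖ : ℂ) *
        Complex.exp ((Complex.arg (fourierCoeff f 1) : ℂ) * Complex.I) := by
    rw [Complex.norm_mul_exp_arg_mul_I]
  nth_rewrite 2 [key]
  rw [mul_left_comm, ← Complex.exp_add]
  congr 1
  push_cast
  ring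
end

section
/- Surjectivity of the transformation onto the shift orbit (surjection part of Theorem 1): let T > 0 and let f : AddCircle T → ℂ be integrable with c₁(f) ≠ 0. Then {g : AddCircle T → ℂ | ∃ φ : ℝ, g = 𝒯(f, φ)} = {g : AddCircle T → ℂ | ∃ t' : ℝ, ∀ x, g x = f (x − ↑t')}; i.e., the outputs of the transformation over all angles are exactly the circular translates of f, so every shifted variant of f is realized by some phase angle φ. -/
open MeasureTheory
set_option maxHeartbeats 1000000

lemma deltaPhi_coe (T : ℝ) [Fact (0 < T)] (f : AddCircle T → ℂ) (φ : ℝ) :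
    ((deltaPhi T f φ : ℝ) : AddCircle T) = ((theta T f φ * T / (2 * Real.pi) : ℝ) : AddCircle T) := by
  unfold deltaPhi
  split
  · have hπ : (2 * Real.pi) ≠ 0 := ne_of_gt Real.two_pi_pos
    have : (theta T f φ - 2 * Real.pi) * T / (2 * Real.pi)
        = theta T f φ * T / (2 * Real.pi) - T := by field_simp
    rw [this, AddCircle.coe_sub, AddCircle.coe_period, sub_zero]
  · rfl

/-- Surjectivity of the transformation onto the shift orbit: the outputs of the
transformation over all angles are exactly the circular translates of `f`. -/
theorem transf_range_eq_shift_orbit (T : ℝ) [Fact (0 < T)] (f : AddCircle T → ℂ)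
    (hf : Integrable f AddCircle.haarAddCircle) (hc : fourierCoeff f 1 ≠ 0) :
    {g : AddCircle T → ℂ | ∃ φ : ℝ, g = transf T f φ} =
      {g : AddCircle T → ℂ | ∃ t' : ℝ, ∀ x : AddCircle T, g x = f (x - (t' : AddCircle T))} := by
  have hT : (0 : ℝ) < T := Fact.out
  have hπ : (2 * Real.pi) ≠ 0 := ne_of_gt Real.two_pi_pos
  ext g
  simp only [Set.mem_setOf_eq]
  constructor
  · rintro ⟨φ, rfl⟩
    exact ⟨deltaPhi T f φ, fun x => rfl⟩
  · rintro ⟨t', ht⟩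
    set φ := Complex.arg (fourierCoeff f 1) - t' * (2 * Real.pi) / T with hφ
    refine ⟨φ, ?_⟩
    have hθ : theta T f φ = toIcoMod Real.two_pi_pos 0 (t' * (2 * Real.pi) / T) := by
      unfold theta
      rw [hφ]
      ring_nf
    set n := toIcoDiv Real.two_pi_pos 0 (t' * (2 * Real.pi) / T) with hn
    have hmod : theta T f φ = t' * (2 * Real.pi) / T - n • (2 * Real.pi) := by
      rw [hθ, hn]; rfl
    have key : ((deltaPhi T f φ : ℝ) : AddCircle T) = ((t' : ℝ) : AddCircle T) := by
      rw [deltaPhi_coe, hmod]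
      have : (t' * (2 * Real.pi) / T - n • (2 * Real.pi)) * T / (2 * Real.pi)
          = t' - n * T := by
        have hT0 : T ≠ 0 := ne_of_gt hT
        field_simp
        ring
      have hz : (n : ℝ) * T = n • T := by simp
      rw [this, hz, AddCircle.coe_sub, AddCircle.coe_zsmul,
        AddCircle.coe_period, smul_zero, sub_zero]
    funext x
    rw [ht x]
    unfold transf
    rw [key]
end

section
/- Idempotence of the transformation: let T > 0, let f : AddCircle T → ℂ be integrable with c₁(f) ≠ 0, and let φ : ℝ. Then c₁(𝒯(f,φ)) ≠ 0, and 𝒯(𝒯(f,φ), φ) = 𝒯(f,φ) as functions AddCircle T → ℂ; i.e., a signal already mapped to the manifold of angle φ is left unchanged by a second application of the transformation with the same angle. -/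
open MeasureTheory

open AddCircle

/-- Fourier coefficients of a circular shift. -/
lemma fourierCoeff_translate (T : ℝ) [hT : Fact (0 < T)] (f : AddCircle T → ℂ) (a : ℝ) (n : ℤ) :
    fourierCoeff (fun x => f (x - (a : AddCircle T))) n
      = fourier (-n) (a : AddCircle T) * fourierCoeff f n := by
  unfold fourierCoeff
  have h1 : ∫ t, fourier (-n) t • f (t - (a : AddCircle T)) ∂haarAddCircle
      = ∫ t, fourier (-n) (t + (a : AddCircle T)) • f t ∂haarAddCircle := by
    rw [← integral_add_right_eq_self
      (fun t => fourier (-n) t • f (t - (a : AddCircle T))) (a : AddCircle T)]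
    simp
  rw [h1]
  have h2 : ∀ t : AddCircle T, fourier (-n) (t + (a : AddCircle T)) • f t
      = fourier (-n) (a : AddCircle T) * (fourier (-n) t • f t) := by
    intro t
    simp only [fourier_apply, smul_add, toCircle_add, Circle.coe_mul, smul_eq_mul]
    ring
  simp_rw [h2, integral_const_mul]

/-- Idempotence of the transformation: a signal already mapped to the manifold of angle `φ`
is left unchanged by a second application of the transformation with the same angle. -/
theorem transf_idempotent (T : ℝ) [Fact (0 < T)] (f : AddCircle T → ℂ)
    (hf : Integrable f AddCircle.haarAddCircle) (hc : fourierCoeff f 1 ≠ 0) (φ : ℝ) :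
    fourierCoeff (transf T f φ) 1 ≠ 0 ∧ transf T (transf T f φ) φ = transf T f φ := by
  have hT : (0:ℝ) < T := Fact.out
  set θ := theta T f φ with hθ
  set a := deltaPhi T f φ with ha
  set c := fourierCoeff f 1 with hcdef
  have hcoeff : fourierCoeff (transf T f φ) 1
      = fourier (-1) ((a : ℝ) : AddCircle T) * c := fourierCoeff_translate T f a 1
  have hfour : fourier (-1) ((a : ℝ) : AddCircle T)
      = Complex.exp (((-θ : ℝ) : ℂ) * Complex.I) := by
    rw [fourier_coe_apply]
    have h2a : 2 * Real.pi * a / T = θ ∨ 2 * Real.pi * a / T = θ - 2 * Real.pi := by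
      rw [ha, deltaPhi]
      split_ifs
      · right; field_simp; rfl
      · left; field_simp; rfl
    have hrw : Complex.exp (2 * Real.pi * Complex.I * ((-1 : ℤ) : ℂ) * a / T)
        = Complex.exp (((-(2 * Real.pi * a / T) : ℝ) : ℂ) * Complex.I) := by
      congr 1
      push_cast
      have : (T : ℂ) ≠ 0 := by exact_mod_cast hT.ne'
      field_simp
    rw [hrw]
    rcases h2a with h | h
    · rw [h]
    · rw [h]
      rw [show ((-(θ - 2 * Real.pi) : ℝ) : ℂ) * Complex.I
          = ((-θ : ℝ) : ℂ) * Complex.I + (2 * Real.pi : ℝ) * Complex.I by push_cast; ring,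
        Complex.exp_add]
      norm_num [Complex.exp_two_pi_mul_I]
  have hne : fourierCoeff (transf T f φ) 1 ≠ 0 := by
    rw [hcoeff, hfour]
    exact mul_ne_zero (Complex.exp_ne_zero _) hc
  refine ⟨hne, ?_⟩
  obtain ⟨k, hk⟩ : ∃ k : ℤ, Complex.arg c - φ - θ = k * (2 * Real.pi) := by
    refine ⟨toIcoDiv Real.two_pi_pos 0 (Complex.arg c - φ), ?_⟩
    have := self_sub_toIcoMod Real.two_pi_pos 0 (Complex.arg c - φ)
    rw [hθ, theta]
    push_cast [zsmul_eq_mul] at this ⊢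
    linarith [this]
  have hexp : Complex.exp (((-θ : ℝ) : ℂ) * Complex.I)
      * Complex.exp ((Complex.arg c : ℂ) * Complex.I)
      = Complex.exp (((φ + k * (2 * Real.pi) : ℝ) : ℂ) * Complex.I) := by
    rw [← Complex.exp_add, ← add_mul]
    congr 2
    push_cast
    ring_nf
    norm_cast
    linarith [hk]
  have hcval : fourierCoeff (transf T f φ) 1
      = ((‖c‖ : ℝ) : ℂ)
        * Complex.exp (((φ + k * (2 * Real.pi) : ℝ) : ℂ) * Complex.I) := by
    rw [hcoeff, hfour]
    conv_lhs => rw [← Complex.norm_mul_exp_arg_mul_I c]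
    rw [mul_left_comm, hexp]
  have harg : Complex.arg (fourierCoeff (transf T f φ) 1)
      = toIocMod Real.two_pi_pos (-Real.pi) (φ + k * (2 * Real.pi)) := by
    rw [hcval, Complex.arg_real_mul _ (norm_pos_iff.mpr hc),
      Complex.arg_exp_mul_I]
  have hθ0 : theta T (transf T f φ) φ = 0 := by
    obtain ⟨m, hm⟩ : ∃ m : ℤ, φ + k * (2 * Real.pi)
        - toIocMod Real.two_pi_pos (-Real.pi) (φ + k * (2 * Real.pi)) = m * (2 * Real.pi) := by
      refine ⟨toIocDiv Real.two_pi_pos (-Real.pi) (φ + k * (2 * Real.pi)), ?_⟩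
      have := self_sub_toIocMod Real.two_pi_pos (-Real.pi) (φ + k * (2 * Real.pi))
      push_cast [zsmul_eq_mul] at this ⊢
      linarith [this]
    rw [theta, harg]
    have hrw2 : toIocMod Real.two_pi_pos (-Real.pi) (φ + k * (2 * Real.pi)) - φ
        = 0 + (k - m) • (2 * Real.pi) := by
      push_cast [zsmul_eq_mul]
      linarith [hm]
    rw [hrw2, toIcoMod_add_zsmul, toIcoMod_apply_left]
  have hd0 : deltaPhi T (transf T f φ) φ = 0 := by
    rw [deltaPhi, hθ0]
    simp [not_lt.mpr Real.pi_pos.le]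
  funext x
  show transf T f φ (x - _) = _
  rw [hd0]
  simp
end
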